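/- arXiv:1410.0283 — 2 statements merged into one kernel-verified Lean document; each statement's English description precedes it below -/
import Mathlib

section
/- Let R = [[A,B],[C,D]] with A ∈ ℂ^{n×n} Schur stable and R*·diag(I_n,I_p)·R = diag(I_n,I_m). Then the transfer function F(z) = C(zI − A)^{-1}B + D satisfies (F(z))*F(z) = I_m for every z on the unit circle. -/
open Matrix

/-- If `R = [[A,B],[C,D]]` is an isometric realization matrix with `A` Schur
stable, then the transfer function `F(z) = C (zI - A)⁻¹ B + D` is isometric on
the unit circle. -/
theorem isometric_realization_paraunitary (n p m : ℕ) (hpm : m ≤ p)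
    (A : Matrix (Fin n) (Fin n) ℂ) (B : Matrix (Fin n) (Fin m) ℂ)
    (C : Matrix (Fin p) (Fin n) ℂ) (D : Matrix (Fin p) (Fin m) ℂ)
    (hA : ∀ μ ∈ spectrum ℂ A, ‖μ‖ < 1)
    (h1 : Aᴴ * A + Cᴴ * C = 1) (h2 : Aᴴ * B + Cᴴ * D = 0)
    (h3 : Bᴴ * B + Dᴴ * D = 1) :
    ∀ z : ℂ, ‖z‖ = 1 →
      (C * (z • (1 : Matrix (Fin n) (Fin n) ℂ) - A)⁻¹ * B + D)ᴴ *
        (C * (z • (1 : Matrix (Fin n) (Fin n) ℂ) - A)⁻¹ * B + D) = 1 := by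
  intro z hz
  set M : Matrix (Fin n) (Fin n) ℂ := z • 1 - A with hM
  have hzs : z ∉ spectrum ℂ A := fun h => by
    have := hA z h; simp [hz] at this
  have hU : IsUnit M := by
    have := spectrum.notMem_iff.mp hzs
    rwa [Algebra.algebraMap_eq_smul_one] at this
  have hUdet : IsUnit M.det := (Matrix.isUnit_iff_isUnit_det M).mp hU
  set G : Matrix (Fin n) (Fin n) ℂ := M⁻¹ with hG
  have hMG : M * G = 1 := Matrix.mul_nonsing_inv M hUdet
  have hGM : G * M = 1 := Matrix.nonsing_inv_mul M hUdet
  have hGHMH : Gᴴ * Mᴴ = 1 := by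
    have := congrArg conjTranspose hMG
    rwa [Matrix.conjTranspose_mul, Matrix.conjTranspose_one] at this
  -- cancellation lemmas
  have hc1 : ∀ X : Matrix (Fin n) (Fin m) ℂ, M * (G * X) = X := fun X => by
    rw [← Matrix.mul_assoc, hMG, Matrix.one_mul]
  have hc2 : ∀ X : Matrix (Fin n) (Fin m) ℂ, Gᴴ * (Mᴴ * X) = X := fun X => by
    rw [← Matrix.mul_assoc, hGHMH, Matrix.one_mul]
  -- conjugate of z
  have hzz : (starRingEnd ℂ) z * z = 1 := by
    rw [mul_comm, Complex.mul_conj, Complex.normSq_eq_norm_sq, hz]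
    norm_num
  -- Mᴴ
  have hMH : Mᴴ = (starRingEnd ℂ) z • 1 - Aᴴ := by
    rw [hM, Matrix.conjTranspose_sub, Matrix.conjTranspose_smul,
      Matrix.conjTranspose_one]
    rfl
  -- key identity: Cᴴ C = Mᴴ M + Aᴴ M + Mᴴ A
  have hsum1 : Mᴴ + Aᴴ = (starRingEnd ℂ) z • 1 := by rw [hMH]; abel
  have hsum2 : M + A = z • 1 := by rw [hM]; abel
  have hkey : Cᴴ * C = Mᴴ * M + Aᴴ * M + Mᴴ * A := by
    have h1' : Cᴴ * C = 1 - Aᴴ * A := by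
      rw [← h1]; abel
    have e1 : Mᴴ * M + Aᴴ * M + Mᴴ * A + Aᴴ * A = (Mᴴ + Aᴴ) * (M + A) := by
      simp only [Matrix.add_mul, Matrix.mul_add]; abel
    have e2 : (Mᴴ + Aᴴ) * (M + A) = 1 := by
      rw [hsum1, hsum2, Matrix.smul_mul, Matrix.mul_smul, smul_smul, hzz,
        one_smul, Matrix.one_mul]
    have e3 : Mᴴ * M + Aᴴ * M + Mᴴ * A = 1 - Aᴴ * A := by
      rw [← e2, ← e1]; abel
    rw [h1', e3]
  have hCD : Cᴴ * D = -(Aᴴ * B) := (neg_eq_of_add_eq_zero_right h2).symm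
  have hDC : Dᴴ * C = -(Bᴴ * A) := by
    have := congrArg conjTranspose hCD
    rwa [Matrix.conjTranspose_mul, Matrix.conjTranspose_neg,
      Matrix.conjTranspose_mul, Matrix.conjTranspose_conjTranspose,
      Matrix.conjTranspose_conjTranspose] at this
  have hDC' : ∀ X : Matrix (Fin n) (Fin m) ℂ,
      Dᴴ * (C * X) = -(Bᴴ * (A * X)) := fun X => by
    rw [← Matrix.mul_assoc, hDC, Matrix.neg_mul, Matrix.mul_assoc]
  have hDD : Dᴴ * D = 1 - Bᴴ * B := by rw [← h3]; abel
  -- expand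
  calc (C * G * B + D)ᴴ * (C * G * B + D)
      = Bᴴ * (Gᴴ * ((Cᴴ * C) * (G * B))) + Bᴴ * (Gᴴ * (Cᴴ * D))
        + Dᴴ * (C * (G * B)) + Dᴴ * D := by
        simp only [Matrix.conjTranspose_add, Matrix.conjTranspose_mul,
          Matrix.add_mul, Matrix.mul_add, Matrix.mul_assoc]
        abel
    _ = 1 := by
        rw [hkey, hCD, hDC', hDD]
        simp only [Matrix.add_mul, Matrix.mul_add, Matrix.neg_mul,
          Matrix.mul_neg, Matrix.mul_assoc, hc1, hc2]
        abel
end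

section
/- Let F₀(z) = ∑_{j=0}^γ z^j B_j be a matrix polynomial with p×m coefficients, p ≥ m, and H₀ the associated (γ+1)p×(γ+1)m block Hankel matrix with (i,j) block B_{i+j} (where B_k := 0 for k > γ). If (I_{m(γ+1)} − H₀*H₀)·[I_m; 0]ᵀ = 0 then the coefficients satisfy ∑_{j=0}^{γ-k} B_j* B_{j+k} = δ_{k,0} I_m for k = 0,…,γ, and consequently (F₀(z))* F₀(z) = I_m for all z on the unit circle. -/
open Matrix Finset

/-- For a matrix polynomial `F₀(z) = ∑_{j=0}^γ z^j B_j` (`p×m` coefficients,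
`B_k = 0` for `k > γ`) with associated block Hankel matrix `H₀` whose `(i,j)`
block is `B_{i+j}`: if `(I - H₀ᴴH₀)·[I_m; 0] = 0`, then
`∑_j B_jᴴ B_{j+k} = δ_{k,0} I_m` for `0 ≤ k ≤ γ`, and consequently
`F₀(z)ᴴ F₀(z) = I_m` on the unit circle. -/
theorem hankel_condition_implies_paraunitary (p m γ : ℕ) (hpm : m ≤ p)
    (B : ℕ → Matrix (Fin p) (Fin m) ℂ) (hB : ∀ k, γ < k → B k = 0)
    (H₀ : Matrix (Fin (γ + 1) × Fin p) (Fin (γ + 1) × Fin m) ℂ)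
    (hH₀ : ∀ i j, H₀ i j = B ((i.1 : ℕ) + (j.1 : ℕ)) i.2 j.2)
    (E : Matrix (Fin (γ + 1) × Fin m) (Fin m) ℂ)
    (hE : ∀ i j, E i j = if i.1 = 0 ∧ i.2 = j then 1 else 0)
    (h : ((1 : Matrix (Fin (γ + 1) × Fin m) (Fin (γ + 1) × Fin m) ℂ) -
        H₀ᴴ * H₀) * E = 0) :
    (∀ k ≤ γ, ∑ j ∈ range (γ + 1 - k), (B j)ᴴ * B (j + k) =
        if k = 0 then 1 else 0) ∧
    ∀ z : ℂ, ‖z‖ = 1 →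
      (∑ j ∈ range (γ + 1), z ^ j • B j)ᴴ * (∑ j ∈ range (γ + 1), z ^ j • B j) =
        1 := by
  -- Step A: extract the block relations from the matrix identity.
  have key : ∀ k ≤ γ, ∑ i ∈ range (γ + 1), (B (i + k))ᴴ * B i =
      (if k = 0 then 1 else 0 : Matrix (Fin m) (Fin m) ℂ) := by
    intro k hk
    have hkn : k < γ + 1 := Nat.lt_succ_of_le hk
    have hentry : ∀ a b : Fin m,
        (∑ i ∈ range (γ + 1), ((B (i + k))ᴴ * B i)) a b =
          if k = 0 ∧ a = b then 1 else 0 := by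
      intro a b
      have h0 : (((1 : Matrix (Fin (γ + 1) × Fin m) (Fin (γ + 1) × Fin m) ℂ) -
          H₀ᴴ * H₀) * E) ((⟨k, hkn⟩ : Fin (γ + 1)), a) b = 0 := by
        rw [h]; rfl
      have hE' : ∀ x : Fin (γ + 1) × Fin m,
          E x b = if x = ((0 : Fin (γ + 1)), b) then 1 else 0 := by
        intro x; rw [hE]; simp [Prod.ext_iff]
      rw [Matrix.mul_apply] at h0
      simp only [hE', mul_ite, mul_one, mul_zero] at h0
      rw [Finset.sum_ite_eq'] at h0
      simp only [Finset.mem_univ, if_true, Matrix.sub_apply] at h0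
      rw [sub_eq_zero] at h0
      have hlhs : ((1 : Matrix (Fin (γ + 1) × Fin m) (Fin (γ + 1) × Fin m) ℂ))
          ((⟨k, hkn⟩ : Fin (γ + 1)), a) ((0 : Fin (γ + 1)), b) =
            if k = 0 ∧ a = b then 1 else 0 := by
        rw [Matrix.one_apply]
        congr 1
        simp [Prod.ext_iff, Fin.ext_iff]
      rw [hlhs] at h0
      rw [h0, Matrix.mul_apply]
      rw [Fintype.sum_prod_type]
      rw [Matrix.sum_apply]
      rw [← Fin.sum_univ_eq_sum_range
        (fun i => ((B (i + k))ᴴ * B i) a b) (γ + 1)]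
      refine Finset.sum_congr rfl fun i _ => ?_
      rw [Matrix.mul_apply]
      refine Finset.sum_congr rfl fun r _ => ?_
      rw [Matrix.conjTranspose_apply, Matrix.conjTranspose_apply, hH₀, hH₀]
      simp [mul_comm]
    ext a b
    rw [hentry a b]
    by_cases hk0 : k = 0
    · simp [hk0, Matrix.one_apply]
    · simp [hk0]
  -- Step B: first goal.
  have goal1 : ∀ k ≤ γ, ∑ j ∈ range (γ + 1 - k), (B j)ᴴ * B (j + k) =
      (if k = 0 then 1 else 0 : Matrix (Fin m) (Fin m) ℂ) := by
    intro k hk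
    have h1 : ∑ j ∈ range (γ + 1 - k), (B (j + k))ᴴ * B j =
        (if k = 0 then 1 else 0 : Matrix (Fin m) (Fin m) ℂ) := by
      rw [← key k hk]
      apply Finset.sum_subset
      · exact Finset.range_subset_range.2 (by omega)
      · intro j hj hj2
        rw [Finset.mem_range] at hj
        rw [Finset.mem_range] at hj2
        rw [hB (j + k) (by omega)]
        simp
    calc ∑ j ∈ range (γ + 1 - k), (B j)ᴴ * B (j + k)
        = (∑ j ∈ range (γ + 1 - k), (B (j + k))ᴴ * B j)ᴴ := by
          rw [conjTranspose_sum]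
          exact Finset.sum_congr rfl fun j _ => by
            rw [Matrix.conjTranspose_mul, Matrix.conjTranspose_conjTranspose]
      _ = (if k = 0 then 1 else 0 : Matrix (Fin m) (Fin m) ℂ) := by
          rw [h1]; split <;> simp
  refine ⟨goal1, ?_⟩
  -- full-range versions
  have Gfull : ∀ k : ℕ, ∑ j ∈ range (γ + 1), (B j)ᴴ * B (j + k) =
      (if k = 0 then 1 else 0 : Matrix (Fin m) (Fin m) ℂ) := by
    intro k
    by_cases hk : k ≤ γ
    · rw [← goal1 k hk]
      symm
      apply Finset.sum_subset
      · exact Finset.range_subset_range.2 (by omega)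
      · intro j hj hj2
        rw [Finset.mem_range] at hj
        rw [Finset.mem_range] at hj2
        rw [hB (j + k) (by omega)]
        simp
    · rw [if_neg (by omega)]
      apply Finset.sum_eq_zero
      intro j _
      rw [hB (j + k) (by omega)]
      simp
  have GfullT : ∀ k : ℕ, 1 ≤ k →
      ∑ j ∈ range (γ + 1), (B (j + k))ᴴ * B j = 0 := by
    intro k hk
    have := congrArg Matrix.conjTranspose (Gfull k)
    rw [if_neg (by omega)] at this
    rw [conjTranspose_sum] at this
    simp only [Matrix.conjTranspose_mul, Matrix.conjTranspose_conjTranspose,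
      Matrix.conjTranspose_zero] at this
    exact this
  intro z hz1
  have hzz : star z * z = 1 := by
    have h1 : z * (starRingEnd ℂ) z = 1 := by
      rw [Complex.mul_conj, Complex.normSq_eq_norm_sq, hz1]; norm_num
    rw [mul_comm]; exact h1
  have hcoef1 : ∀ a b : ℕ, star z ^ (b + a) * z ^ b = star z ^ a := by
    intro a b
    rw [pow_add, mul_right_comm, ← mul_pow, hzz, one_pow, one_mul]
  have hcoef2 : ∀ a b : ℕ, star z ^ b * z ^ (b + a) = z ^ a := by
    intro a b
    rw [pow_add, ← mul_assoc, ← mul_pow, hzz, one_pow, one_mul]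
  have expand : (∑ j ∈ range (γ + 1), z ^ j • B j)ᴴ *
      (∑ j ∈ range (γ + 1), z ^ j • B j)
      = ∑ j ∈ range (γ + 1), ∑ l ∈ range (γ + 1),
          (star (z ^ j) * z ^ l) • ((B j)ᴴ * B l) := by
    rw [conjTranspose_sum, Matrix.sum_mul]
    refine Finset.sum_congr rfl fun j _ => ?_
    rw [Matrix.conjTranspose_smul, Matrix.mul_sum]
    refine Finset.sum_congr rfl fun l _ => ?_
    rw [Matrix.smul_mul, Matrix.mul_smul, smul_smul]
  rw [expand]
  have splitj : ∀ j ∈ range (γ + 1),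
      (∑ l ∈ range (γ + 1), (star (z ^ j) * z ^ l) • ((B j)ᴴ * B l))
        = (∑ l ∈ range j, (star (z ^ j) * z ^ l) • ((B j)ᴴ * B l)) +
          ∑ l ∈ Ico j (γ + 1), (star (z ^ j) * z ^ l) • ((B j)ᴴ * B l) := by
    intro j hj
    have hcons := Finset.sum_Ico_consecutive
      (fun l => (star (z ^ j) * z ^ l) • ((B j)ᴴ * B l))
      (Nat.zero_le j) (le_of_lt (Finset.mem_range.1 hj))
    rw [Finset.range_eq_Ico, ← hcons, ← Finset.range_eq_Ico]
  rw [Finset.sum_congr rfl splitj, Finset.sum_add_distrib]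
  have hD1 : ∑ j ∈ range (γ + 1), ∑ l ∈ range j,
      (star (z ^ j) * z ^ l) • ((B j)ᴴ * B l) = 0 := by
    rw [Finset.sum_comm' (t' := range (γ + 1))
      (s' := fun l => Ico (l + 1) (γ + 1))
      (fun x y => by
        simp only [Finset.mem_range, Finset.mem_Ico]
        omega)]
    have step : ∀ l ∈ range (γ + 1),
        ∑ j ∈ Ico (l + 1) (γ + 1), (star (z ^ j) * z ^ l) • ((B j)ᴴ * B l)
          = ∑ kk ∈ range (γ + 1),
              star z ^ (1 + kk) • ((B (l + (1 + kk)))ᴴ * B l) := by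
      intro l hl
      rw [Finset.sum_Ico_eq_sum_range]
      rw [Finset.sum_subset (Finset.range_subset_range.2
          (show γ + 1 - (l + 1) ≤ γ + 1 by omega))
        (fun kk hk1 hk2 => by
          rw [Finset.mem_range] at hk1 hk2
          rw [hB (l + 1 + kk) (by omega)]
          simp)]
      refine Finset.sum_congr rfl fun kk _ => ?_
      have he : l + 1 + kk = l + (1 + kk) := by omega
      rw [he, star_pow, hcoef1 (1 + kk) l]
    rw [Finset.sum_congr rfl step, Finset.sum_comm]
    refine Finset.sum_eq_zero fun kk _ => ?_
    rw [← Finset.smul_sum, GfullT (1 + kk) (by omega), smul_zero]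
  have hD2 : ∑ j ∈ range (γ + 1), ∑ l ∈ Ico j (γ + 1),
      (star (z ^ j) * z ^ l) • ((B j)ᴴ * B l) = 1 := by
    have step : ∀ j ∈ range (γ + 1),
        ∑ l ∈ Ico j (γ + 1), (star (z ^ j) * z ^ l) • ((B j)ᴴ * B l)
          = ∑ kk ∈ range (γ + 1), z ^ kk • ((B j)ᴴ * B (j + kk)) := by
      intro j hj
      rw [Finset.sum_Ico_eq_sum_range]
      rw [Finset.sum_subset (Finset.range_subset_range.2
          (show γ + 1 - j ≤ γ + 1 by omega))
        (fun kk hk1 hk2 => by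
          rw [Finset.mem_range] at hk1 hk2
          rw [hB (j + kk) (by omega), Matrix.mul_zero, smul_zero])]
      refine Finset.sum_congr rfl fun kk _ => ?_
      rw [star_pow, hcoef2 kk j]
    rw [Finset.sum_congr rfl step, Finset.sum_comm]
    have hin : ∀ kk ∈ range (γ + 1),
        ∑ j ∈ range (γ + 1), z ^ kk • ((B j)ᴴ * B (j + kk))
          = if kk = 0 then (1 : Matrix (Fin m) (Fin m) ℂ) else 0 := by
      intro kk _
      rw [← Finset.smul_sum, Gfull kk]
      by_cases h0 : kk = 0 <;> simp [h0]
    rw [Finset.sum_congr rfl hin,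
      Finset.sum_ite_eq' (range (γ + 1)) 0
        (fun _ => (1 : Matrix (Fin m) (Fin m) ℂ))]
    simp
  rw [hD1, hD2, zero_add]
end
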